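/- Convolution with the sectorial Green function solves the source problem: if F : ℝ → ℝ is continuous with compact support and φ(x) = ∫_ℝ G(x − ξ)·F(ξ) dξ, then φ is three times differentiable on ℝ and satisfies φ'''(x) + φ(x) = F(x) for every real x. -/

import Mathlib

open Real MeasureTheory

/-- The sectorial Green function of the cubic operator `D³ + 1`. -/
noncomputable def greenC3 (x : ℝ) : ℝ :=
  if 0 ≤ x then (1/3) * Real.exp (-x)
  else (1/3) * Real.exp (x/2) *
    (Real.cos (Real.sqrt 3 * x / 2) - Real.sqrt 3 * Real.sin (Real.sqrt 3 * x / 2))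

namespace GreenC3Aux

noncomputable def A0 (t : ℝ) : ℝ := (1/3) * Real.exp (-t)
noncomputable def A1 (t : ℝ) : ℝ := -A0 t
noncomputable def B0 (t : ℝ) : ℝ :=
  (1/3) * Real.exp (t/2) *
    (Real.cos (Real.sqrt 3 * t / 2) - Real.sqrt 3 * Real.sin (Real.sqrt 3 * t / 2))
noncomputable def B1 (t : ℝ) : ℝ :=
  (1/3) * Real.exp (t/2) *
    (-Real.cos (Real.sqrt 3 * t / 2) - Real.sqrt 3 * Real.sin (Real.sqrt 3 * t / 2))
noncomputable def B2 (t : ℝ) : ℝ := -(2/3) * Real.exp (t/2) * Real.cos (Real.sqrt 3 * t / 2)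
noncomputable def B3 (t : ℝ) : ℝ := -B0 t

lemma sqrt3_sq : Real.sqrt 3 * Real.sqrt 3 = 3 := Real.mul_self_sqrt (by norm_num)

lemma contA0 : Continuous A0 := by unfold A0; fun_prop
lemma contA1 : Continuous A1 := by unfold A1 A0; fun_prop
lemma contB0 : Continuous B0 := by unfold B0; fun_prop
lemma contB1 : Continuous B1 := by unfold B1; fun_prop
lemma contB2 : Continuous B2 := by unfold B2; fun_prop
lemma contB3 : Continuous B3 := by unfold B3 B0; fun_prop

lemma A0_zero : A0 0 = 1/3 := by simp [A0]
lemma B0_zero : B0 0 = 1/3 := by simp [B0]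
lemma A1_zero : A1 0 = -(1/3) := by norm_num [A1, A0]
lemma B1_zero : B1 0 = -(1/3) := by norm_num [B1]
lemma B2_zero : B2 0 = -(2/3) := by norm_num [B2]

lemma hA0 (t : ℝ) : HasDerivAt A0 (A1 t) t := by
  have h2 := ((Real.hasDerivAt_exp (-t)).comp t ((hasDerivAt_id t).neg)).const_mul (1/3 : ℝ)
  have hv : A1 t = (1/3 : ℝ) * (Real.exp (-t) * (-1)) := by unfold A1 A0; ring
  rw [hv]
  exact h2

lemma hA1 (t : ℝ) : HasDerivAt A1 (A0 t) t := by
  exact (hA0 t).neg.congr_deriv (by simp [A1])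

lemma he (t : ℝ) : HasDerivAt (fun t : ℝ => Real.exp (t/2)) (Real.exp (t/2) * (1/2)) t := by
  have := (Real.hasDerivAt_exp (t/2)).comp t ((hasDerivAt_id t).div_const 2)
  exact this

lemma hc (t : ℝ) : HasDerivAt (fun t : ℝ => Real.cos (Real.sqrt 3 * t / 2))
    (-Real.sin (Real.sqrt 3 * t / 2) * (Real.sqrt 3 / 2)) t := by
  have hu : HasDerivAt (fun t : ℝ => Real.sqrt 3 * t / 2) (Real.sqrt 3 / 2) t := by
    simpa using ((hasDerivAt_id t).const_mul (Real.sqrt 3)).div_const 2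
  exact (Real.hasDerivAt_cos (Real.sqrt 3 * t / 2)).comp t hu

lemma hs (t : ℝ) : HasDerivAt (fun t : ℝ => Real.sin (Real.sqrt 3 * t / 2))
    (Real.cos (Real.sqrt 3 * t / 2) * (Real.sqrt 3 / 2)) t := by
  have hu : HasDerivAt (fun t : ℝ => Real.sqrt 3 * t / 2) (Real.sqrt 3 / 2) t := by
    simpa using ((hasDerivAt_id t).const_mul (Real.sqrt 3)).div_const 2
  exact (Real.hasDerivAt_sin (Real.sqrt 3 * t / 2)).comp t hu

lemma hB0 (t : ℝ) : HasDerivAt B0 (B1 t) t := by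
  have h := ((he t).const_mul (1/3 : ℝ)).mul ((hc t).sub ((hs t).const_mul (Real.sqrt 3)))
  refine h.congr_deriv ?_
  symm
  unfold B1
  simp only [Pi.sub_apply, Pi.neg_apply]
  linear_combination (Real.exp (t/2) * Real.cos (Real.sqrt 3 * t / 2) / 6) * sqrt3_sq

lemma hB1 (t : ℝ) : HasDerivAt B1 (B2 t) t := by
  have h := ((he t).const_mul (1/3 : ℝ)).mul
    (((hc t).neg).sub ((hs t).const_mul (Real.sqrt 3)))
  refine h.congr_deriv ?_
  symm
  unfold B2
  simp only [Pi.sub_apply, Pi.neg_apply]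
  linear_combination (Real.exp (t/2) * Real.cos (Real.sqrt 3 * t / 2) / 6) * sqrt3_sq

lemma hB2 (t : ℝ) : HasDerivAt B2 (B3 t) t := by
  have h := ((he t).const_mul (-(2/3) : ℝ)).mul (hc t)
  refine h.congr_deriv ?_
  symm
  unfold B3 B0
  ring

section Conv

variable {F : ℝ → ℝ} (hF : Continuous F) (hFc : HasCompactSupport F)

include hF hFc in
lemma integ_aux (g : ℝ → ℝ) (hg : Continuous g) (x : ℝ) :
    Integrable (fun ξ => g (x - ξ) * F ξ) := by
  apply Continuous.integrable_of_hasCompactSupport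
  · exact (hg.comp (continuous_const.sub continuous_id)).mul hF
  · exact hFc.mul_left

include hF hFc in
lemma param_deriv (g g' : ℝ → ℝ) (hg : ∀ t, HasDerivAt g (g' t) t) (hg' : Continuous g')
    (s : Set ℝ) (x₀ : ℝ) :
    HasDerivAt (fun x => ∫ ξ in s, g (x - ξ) * F ξ) (∫ ξ in s, g' (x₀ - ξ) * F ξ) x₀ := by
  have hgc : Continuous g := by
    rw [continuous_iff_continuousAt]; exact fun t => (hg t).continuousAt
  obtain ⟨R, hR⟩ := hFc.isBounded.subset_closedBall 0
  obtain ⟨C, hC⟩ := (isCompact_Icc (a := x₀ - 1 - R) (b := x₀ + 1 + R)).exists_bound_of_continuousOn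
    hg'.continuousOn
  have key := hasDerivAt_integral_of_dominated_loc_of_deriv_le
    (μ := volume.restrict s) (F := fun x ξ => g (x - ξ) * F ξ)
    (F' := fun x ξ => g' (x - ξ) * F ξ) (bound := fun ξ => C * ‖F ξ‖)
    (x₀ := x₀) (Metric.ball_mem_nhds x₀ one_pos)
    (Filter.Eventually.of_forall fun x =>
      (((hgc.comp (continuous_const.sub continuous_id)).mul hF).aestronglyMeasurable).restrict)
    ((integ_aux hF hFc g hgc x₀).restrict)
    ((((hg'.comp (continuous_const.sub continuous_id)).mul hF).aestronglyMeasurable).restrict)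
    ?_ (((hF.integrable_of_hasCompactSupport hFc).norm.const_mul C).restrict) ?_
  · exact key.2
  · refine Filter.Eventually.of_forall fun ξ => fun x hx => ?_
    by_cases hξ : F ξ = 0
    · simp [hξ]
    · have hmem : ξ ∈ Metric.closedBall (0:ℝ) R :=
        hR (subset_tsupport F hξ)
      rw [Metric.mem_closedBall, Real.dist_eq, sub_zero] at hmem
      have hx' : |x - x₀| < 1 := by
        simpa [Real.dist_eq] using Metric.mem_ball.mp hx
      have hm1 := abs_le.mp hmem
      have hm2 := abs_lt.mp hx'
      have hmem2 : x - ξ ∈ Set.Icc (x₀ - 1 - R) (x₀ + 1 + R) :=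
        ⟨by linarith [hm1.1, hm1.2, hm2.1, hm2.2], by linarith [hm1.1, hm1.2, hm2.1, hm2.2]⟩
      calc ‖g' (x - ξ) * F ξ‖ = ‖g' (x - ξ)‖ * ‖F ξ‖ := norm_mul _ _
        _ ≤ C * ‖F ξ‖ := by
            exact mul_le_mul_of_nonneg_right (hC _ hmem2) (norm_nonneg _)
  · refine Filter.Eventually.of_forall fun ξ => fun x _ => ?_
    have h := (hg (x - ξ)).comp x ((hasDerivAt_id x).sub_const ξ)
    simpa using h.mul_const (F ξ)

include hF hFc in
lemma univ_deriv (g g' : ℝ → ℝ) (hg : ∀ t, HasDerivAt g (g' t) t) (hg' : Continuous g')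
    (x₀ : ℝ) :
    HasDerivAt (fun x => ∫ ξ, g (x - ξ) * F ξ) (∫ ξ, g' (x₀ - ξ) * F ξ) x₀ := by
  simpa using param_deriv hF hFc g g' hg hg' Set.univ x₀

include hF in
lemma interval_deriv (g : ℝ → ℝ) (hg : Continuous g) (x₀ : ℝ) :
    HasDerivAt (fun x => ∫ ξ in x₀..x, g (x - ξ) * F ξ) (g 0 * F x₀) x₀ := by
  rw [hasDerivAt_iff_isLittleO, Asymptotics.isLittleO_iff]
  intro ε hε
  have hcont : Continuous (fun p : ℝ × ℝ => g (p.1 - p.2) * F p.2) :=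
    (hg.comp (continuous_fst.sub continuous_snd)).mul (hF.comp continuous_snd)
  have hca : ContinuousAt (fun p : ℝ × ℝ => g (p.1 - p.2) * F p.2) (x₀, x₀) :=
    hcont.continuousAt
  rw [Metric.continuousAt_iff] at hca
  obtain ⟨δ, hδ, hball⟩ := hca ε hε
  have hmem : Metric.ball x₀ δ ∈ nhds x₀ := Metric.ball_mem_nhds x₀ hδ
  filter_upwards [hmem] with x hx
  rw [Metric.mem_ball, Real.dist_eq] at hx
  have hint : IntervalIntegrable (fun ξ => g (x - ξ) * F ξ) volume x₀ x :=
    ((hg.comp (continuous_const.sub continuous_id)).mul hF).intervalIntegrable x₀ x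
  have hrw : (∫ ξ in x₀..x, g (x - ξ) * F ξ) - (∫ ξ in x₀..x₀, g (x₀ - ξ) * F ξ)
      - (x - x₀) • (g 0 * F x₀)
      = ∫ ξ in x₀..x, (g (x - ξ) * F ξ - g 0 * F x₀) := by
    rw [intervalIntegral.integral_sub hint (intervalIntegrable_const),
      intervalIntegral.integral_const, intervalIntegral.integral_same]
    simp only [smul_eq_mul]
    ring
  rw [hrw]
  have hb : ∀ ξ ∈ Set.uIoc x₀ x, ‖g (x - ξ) * F ξ - g 0 * F x₀‖ ≤ ε := by
    intro ξ hξ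
    have hξ' : |ξ - x₀| ≤ |x - x₀| := by
      rcases Set.mem_uIoc.mp hξ with h | h <;> cases abs_cases (x - x₀) <;>
        rw [abs_le] <;> constructor <;> linarith [h.1, h.2]
    have hdist : dist (x, ξ) (x₀, x₀) < δ := by
      rw [Prod.dist_eq]
      simp only [Real.dist_eq]
      exact max_lt hx (lt_of_le_of_lt hξ' hx)
    have := hball hdist
    rw [Real.dist_eq, sub_self] at this
    exact le_of_lt this
  calc ‖∫ ξ in x₀..x, (g (x - ξ) * F ξ - g 0 * F x₀)‖ ≤ ε * |x - x₀| :=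
        intervalIntegral.norm_integral_le_of_norm_le_const hb
    _ = ε * ‖x - x₀‖ := by rw [Real.norm_eq_abs]

include hF hFc in
lemma Iic_deriv (g g' : ℝ → ℝ) (hg : ∀ t, HasDerivAt g (g' t) t) (hg' : Continuous g')
    (x₀ : ℝ) :
    HasDerivAt (fun x => ∫ ξ in Set.Iic x, g (x - ξ) * F ξ)
      (g 0 * F x₀ + ∫ ξ in Set.Iic x₀, g' (x₀ - ξ) * F ξ) x₀ := by
  have hgc : Continuous g := by
    rw [continuous_iff_continuousAt]; exact fun t => (hg t).continuousAt
  have heq : (fun x => ∫ ξ in Set.Iic x, g (x - ξ) * F ξ)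
      = fun x => (∫ ξ in Set.Iic x₀, g (x - ξ) * F ξ) + ∫ ξ in x₀..x, g (x - ξ) * F ξ := by
    funext x
    have h1 : IntegrableOn (fun ξ => g (x - ξ) * F ξ) (Set.Iic x) :=
      (integ_aux hF hFc g hgc x).integrableOn
    have h2 : IntegrableOn (fun ξ => g (x - ξ) * F ξ) (Set.Iic x₀) :=
      (integ_aux hF hFc g hgc x).integrableOn
    have h3 := intervalIntegral.integral_Iic_sub_Iic h2 h1
    linarith
  rw [heq]
  have h1 := param_deriv hF hFc g g' hg hg' (Set.Iic x₀) x₀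
  have h2 := interval_deriv hF g hgc x₀
  have := h1.add h2
  exact this.congr_deriv (add_comm _ _)

include hF hFc in
lemma split_integral (x : ℝ) :
    (∫ ξ, greenC3 (x - ξ) * F ξ)
      = (∫ ξ in Set.Iic x, A0 (x - ξ) * F ξ)
        + ((∫ ξ, B0 (x - ξ) * F ξ) - ∫ ξ in Set.Iic x, B0 (x - ξ) * F ξ) := by
  have hB : Integrable (fun ξ => B0 (x - ξ) * F ξ) := integ_aux hF hFc B0 contB0 x
  have hA : Integrable (fun ξ => A0 (x - ξ) * F ξ) := integ_aux hF hFc A0 contA0 x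
  have hsplit := MeasureTheory.integral_add_compl (measurableSet_Iic (a := x)) hB
  have heq : (∫ ξ, greenC3 (x - ξ) * F ξ)
      = ∫ ξ, ((Set.Iic x).indicator (fun ξ => A0 (x - ξ) * F ξ) ξ
          + (Set.Iic x)ᶜ.indicator (fun ξ => B0 (x - ξ) * F ξ) ξ) := by
    congr 1
    funext ξ
    by_cases hξ : ξ ≤ x
    · have hm : ξ ∈ Set.Iic x := Set.mem_Iic.mpr hξ
      have hm' : ξ ∉ (Set.Iic x)ᶜ := by simp [hξ]
      rw [Set.indicator_of_mem hm, Set.indicator_of_notMem hm']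
      have : (0:ℝ) ≤ x - ξ := by linarith
      simp [greenC3, this, A0]
    · have hm : ξ ∈ (Set.Iic x)ᶜ := by simpa using lt_of_not_ge hξ
      have hm' : ξ ∉ Set.Iic x := by simp [hξ]
      rw [Set.indicator_of_notMem hm', Set.indicator_of_mem hm]
      have hlt : x < ξ := lt_of_not_ge hξ
      have : ¬ (0:ℝ) ≤ x - ξ := not_le.mpr (by linarith)
      simp [greenC3, this, B0]
  rw [heq, MeasureTheory.integral_add
    (hA.indicator measurableSet_Iic) (hB.indicator (measurableSet_Iic.compl)),
    MeasureTheory.integral_indicator measurableSet_Iic,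
    MeasureTheory.integral_indicator measurableSet_Iic.compl]
  have : ∫ ξ in (Set.Iic x)ᶜ, B0 (x - ξ) * F ξ
      = (∫ ξ, B0 (x - ξ) * F ξ) - ∫ ξ in Set.Iic x, B0 (x - ξ) * F ξ := by
    linarith [hsplit]
  rw [this]

end Conv

end GreenC3Aux

open GreenC3Aux in
theorem greenC3_convolution_solves_source :
    ∀ F : ℝ → ℝ, Continuous F → HasCompactSupport F →
      ∀ φ : ℝ → ℝ, (∀ x : ℝ, φ x = ∫ ξ : ℝ, greenC3 (x - ξ) * F ξ) →
      ∀ x : ℝ,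
        DifferentiableAt ℝ φ x ∧
        DifferentiableAt ℝ (deriv φ) x ∧
        DifferentiableAt ℝ (deriv (deriv φ)) x ∧
        deriv (deriv (deriv φ)) x + φ x = F x := by
  intro F hF hFc φ hφ x
  -- notation
  set J : (ℝ → ℝ) → ℝ → ℝ := fun g x => ∫ ξ in Set.Iic x, g (x - ξ) * F ξ with hJ
  set W : (ℝ → ℝ) → ℝ → ℝ := fun g x => ∫ ξ, g (x - ξ) * F ξ with hW
  have hφ' : φ = fun x => J A0 x + (W B0 x - J B0 x) := by
    funext y
    rw [hφ y, split_integral hF hFc y]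
  -- first derivative
  have h1 : ∀ y : ℝ, HasDerivAt φ (J A1 y + (W B1 y - J B1 y)) y := by
    intro y
    have hd := ((Iic_deriv hF hFc A0 A1 hA0 contA1 y).add
      ((univ_deriv hF hFc B0 B1 hB0 contB1 y).sub (Iic_deriv hF hFc B0 B1 hB0 contB1 y)))
    rw [hφ']
    refine hd.congr_deriv ?_
    symm
    simp only [hJ, hW]
    rw [A0_zero, B0_zero]
    ring
  have hderiv1 : deriv φ = fun y => J A1 y + (W B1 y - J B1 y) := by
    funext y; exact (h1 y).deriv
  -- second derivative
  have h2 : ∀ y : ℝ, HasDerivAt (deriv φ) (J A0 y + (W B2 y - J B2 y)) y := by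
    intro y
    have hd := ((Iic_deriv hF hFc A1 A0 hA1 contA0 y).add
      ((univ_deriv hF hFc B1 B2 hB1 contB2 y).sub (Iic_deriv hF hFc B1 B2 hB1 contB2 y)))
    rw [hderiv1]
    refine hd.congr_deriv ?_
    symm
    simp only [hJ, hW]
    rw [A1_zero, B1_zero]
    ring
  have hderiv2 : deriv (deriv φ) = fun y => J A0 y + (W B2 y - J B2 y) := by
    funext y; exact (h2 y).deriv
  -- third derivative
  have h3 : ∀ y : ℝ, HasDerivAt (deriv (deriv φ))
      (F y - (J A0 y + (W B0 y - J B0 y))) y := by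
    intro y
    have hd := ((Iic_deriv hF hFc A0 A1 hA0 contA1 y).add
      ((univ_deriv hF hFc B2 B3 hB2 contB3 y).sub (Iic_deriv hF hFc B2 B3 hB2 contB3 y)))
    rw [hderiv2]
    refine hd.congr_deriv ?_
    symm
    have e1 : (∫ ξ in Set.Iic y, A1 (y - ξ) * F ξ) = -∫ ξ in Set.Iic y, A0 (y - ξ) * F ξ := by
      simp [A1, neg_mul, MeasureTheory.integral_neg]
    have e2 : (∫ ξ, B3 (y - ξ) * F ξ) = -∫ ξ, B0 (y - ξ) * F ξ := by
      simp [B3, neg_mul, MeasureTheory.integral_neg]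
    have e3 : (∫ ξ in Set.Iic y, B3 (y - ξ) * F ξ) = -∫ ξ in Set.Iic y, B0 (y - ξ) * F ξ := by
      simp [B3, neg_mul, MeasureTheory.integral_neg]
    simp only [hJ, hW]
    rw [A0_zero, B2_zero, e1, e2, e3]
    ring
  refine ⟨(h1 x).differentiableAt, (h2 x).differentiableAt, (h3 x).differentiableAt, ?_⟩
  have : deriv (deriv (deriv φ)) x = F x - (J A0 x + (W B0 x - J B0 x)) := (h3 x).deriv
  rw [this, hφ']
  ring
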